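/- arXiv:1910.07423 — 2 statements merged into one kernel-verified Lean document; each statement's English description precedes it below -/
import Mathlib

section
/- The function f : ℝ → ℝ defined by f(t) = b₁₁ + (2b₁₂(t+1) + b₂₂ − b₁₁)/((t+1)² + 1) is not convex on ℝ whenever b₁₂ ≠ 0 or b₁₁ ≠ b₂₂. -/
/-- A convex function on all of `ℝ` which is bounded (in absolute value) is constant. -/
lemma convexOn_bounded_const {f : ℝ → ℝ} {B : ℝ}
    (hf : ConvexOn ℝ Set.univ f) (hb : ∀ t, |f t| ≤ B) :
    ∀ x y : ℝ, x < y → f x = f y := by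
  have hB : 0 ≤ B := le_trans (abs_nonneg _) (hb 0)
  intro x y hxy
  by_contra hne
  have hyx : (0:ℝ) < y - x := sub_pos.2 hxy
  have hBpos : (0:ℝ) < 2 * B + 1 := by linarith
  rcases lt_or_gt_of_ne hne with hlt | hgt
  · -- f x < f y : slope positive, go far right
    have hdpos : 0 < f y - f x := sub_pos.2 hlt
    have hdne : f y - f x ≠ 0 := ne_of_gt hdpos
    set z := y + (y - x) * (2 * B + 1) / (f y - f x) with hz
    have hzy : z - y = (y - x) * (2 * B + 1) / (f y - f x) := by rw [hz]; ring
    have hzy' : 0 < z - y := by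
      rw [hzy]; exact div_pos (mul_pos hyx hBpos) hdpos
    have hyz : y < z := by linarith
    have hslope := hf.slope_mono_adjacent (Set.mem_univ x) (Set.mem_univ z) hxy hyz
    rw [div_le_div_iff₀ hyx hzy'] at hslope
    have hL : (f y - f x) * (z - y) = (y - x) * (2 * B + 1) := by
      rw [hzy]; field_simp
    rw [hL] at hslope
    have h4 := hb z; have h5 := hb y
    rw [abs_le] at h4 h5
    have h6 : (f z - f y) * (y - x) ≤ 2 * B * (y - x) :=
      mul_le_mul_of_nonneg_right (by linarith) hyx.le
    nlinarith [hslope, h6, hyx]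
  · -- f x > f y : slope negative, go far left
    have hdpos : 0 < f x - f y := sub_pos.2 hgt
    have hdne : f x - f y ≠ 0 := ne_of_gt hdpos
    set w := x - (y - x) * (2 * B + 1) / (f x - f y) with hw
    have hxw : x - w = (y - x) * (2 * B + 1) / (f x - f y) := by rw [hw]; ring
    have hxw' : 0 < x - w := by
      rw [hxw]; exact div_pos (mul_pos hyx hBpos) hdpos
    have hwx : w < x := by linarith
    have hslope := hf.slope_mono_adjacent (Set.mem_univ w) (Set.mem_univ y) hwx hxy
    rw [div_le_div_iff₀ hxw' hyx] at hslope
    have hL : (f y - f x) * (x - w) = -((y - x) * (2 * B + 1)) := by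
      rw [hxw]; field_simp; ring
    rw [hL] at hslope
    have h4 := hb w; have h5 := hb x
    rw [abs_le] at h4 h5
    have h6 : -(2 * B) * (y - x) ≤ (f x - f w) * (y - x) :=
      mul_le_mul_of_nonneg_right (by linarith) hyx.le
    nlinarith [hslope, h6, hyx]

/-- f(t) = b₁₁ + (2b₁₂(t+1) + b₂₂ − b₁₁)/((t+1)² + 1) is not convex on ℝ
whenever b₁₂ ≠ 0 or b₁₁ ≠ b₂₂. -/
theorem stmt_9 (b11 b12 b22 : ℝ) (h : b12 ≠ 0 ∨ b11 ≠ b22) :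
    ¬ ConvexOn ℝ Set.univ
      (fun t : ℝ => b11 + (2 * b12 * (t + 1) + b22 - b11) / ((t + 1) ^ 2 + 1)) := by
  intro hc
  set f : ℝ → ℝ := fun t => b11 + (2 * b12 * (t + 1) + b22 - b11) / ((t + 1) ^ 2 + 1) with hf
  -- boundedness
  have hb : ∀ t, |f t| ≤ |b11| + |b12| + |b22 - b11| := by
    intro t
    have hden : (0:ℝ) < (t + 1) ^ 2 + 1 := by positivity
    rw [abs_le]
    constructor
    · show -(|b11| + |b12| + |b22 - b11|) ≤
        b11 + (2 * b12 * (t + 1) + b22 - b11) / ((t + 1) ^ 2 + 1)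
      have h2 : -(|b12| + |b22 - b11|) ≤
          (2 * b12 * (t + 1) + b22 - b11) / ((t + 1) ^ 2 + 1) := by
        rw [neg_le, ← neg_div, div_le_iff₀ hden]
        nlinarith [le_abs_self b12, neg_abs_le b12, le_abs_self (b22 - b11),
          neg_abs_le (b22 - b11),
          mul_nonneg (abs_nonneg b12) (sq_nonneg (t + 1 - 1)),
          mul_nonneg (abs_nonneg b12) (sq_nonneg (t + 1 + 1)),
          mul_nonneg (abs_nonneg (b22 - b11)) (sq_nonneg (t + 1))]
      linarith [neg_abs_le b11]
    · show b11 + (2 * b12 * (t + 1) + b22 - b11) / ((t + 1) ^ 2 + 1) ≤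
        |b11| + |b12| + |b22 - b11|
      have h2 : (2 * b12 * (t + 1) + b22 - b11) / ((t + 1) ^ 2 + 1) ≤
          |b12| + |b22 - b11| := by
        rw [div_le_iff₀ hden]
        nlinarith [le_abs_self b12, neg_abs_le b12, le_abs_self (b22 - b11),
          neg_abs_le (b22 - b11),
          mul_nonneg (abs_nonneg b12) (sq_nonneg (t + 1 - 1)),
          mul_nonneg (abs_nonneg b12) (sq_nonneg (t + 1 + 1)),
          mul_nonneg (abs_nonneg (b22 - b11)) (sq_nonneg (t + 1))]
      linarith [le_abs_self b11]
  have hconst := convexOn_bounded_const hc hb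
  have e1 : f (-1) = f 0 := hconst (-1) 0 (by norm_num)
  have e2 : f (-2) = f (-1) := hconst (-2) (-1) (by norm_num)
  rw [hf] at e1 e2
  simp only at e1 e2
  norm_num at e1 e2
  have hb12 : b12 = 0 := by linarith
  have heq : b11 = b22 := by linarith
  rcases h with h | h
  · exact h hb12
  · exact h heq
end

section
/- Let x be a zero-mean random vector in ℝ^d with positive-definite covariance C_x = Q_xᵀQ_x (Cholesky factorization), and t a random vector in ℝ^m with mean b and cross-covariance C_{xt} = E[x(t−b)ᵀ]. Fix an encoder Θ_E ∈ ℝ^{r×d} and let z = Θ_E x. Then the minimum over W ∈ ℝ^{m×r} of E‖t − (Wz + b)‖² equals Tr(C_t) − ‖P_M Q_x^{−T} C_{xt}‖_F², where M = Q_x Θ_Eᵀ and P_M is the orthogonal projection onto the column space of M. -/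
open Matrix
open scoped Classical

/-- Moore–Penrose pseudoinverse, characterized by the four Penrose equations. -/
noncomputable def pinv {m n : Type*} [Fintype m] [Fintype n] (A : Matrix m n ℝ) : Matrix n m ℝ :=
  if h : ∃ B : Matrix n m ℝ,
      A * B * A = A ∧ B * A * B = B ∧ (A * B)ᵀ = A * B ∧ (B * A)ᵀ = B * A
  then h.choose else 0

lemma exists_penrose_of_symm {n : Type*} [Fintype n] [DecidableEq n]
    (S : Matrix n n ℝ) (hS : Sᵀ = S) :
    ∃ B : Matrix n n ℝ,
      S * B * S = S ∧ B * S * B = B ∧ (S * B)ᵀ = S * B ∧ (B * S)ᵀ = B * S := by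
  have hH : S.IsHermitian := by
    show Sᴴ = S
    rw [Matrix.conjTranspose_eq_transpose_of_trivial]; exact hS
  set U : Matrix n n ℝ := (hH.eigenvectorUnitary : Matrix n n ℝ) with hU
  have hUU : U * star U = 1 := Matrix.mem_unitaryGroup_iff.mp hH.eigenvectorUnitary.2
  have hUU' : star U * U = 1 := Matrix.mem_unitaryGroup_iff'.mp hH.eigenvectorUnitary.2
  set f : n → ℝ := hH.eigenvalues with hf
  have hSpec : S = U * diagonal f * star U := by
    simpa using hH.spectral_theorem
  have key : ∀ g h : n → ℝ, (U * diagonal g * star U) * (U * diagonal h * star U)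
      = U * diagonal (fun i => g i * h i) * star U := by
    intro g h
    have : (U * diagonal g * star U) * (U * diagonal h * star U)
        = U * (diagonal g * (star U * U) * diagonal h) * star U := by
      simp only [Matrix.mul_assoc]
    rw [this, hUU', Matrix.mul_one, diagonal_mul_diagonal]
  have hsymm : ∀ g : n → ℝ, (U * diagonal g * star U)ᵀ = U * diagonal g * star U := by
    intro g
    have hstar : star U = Uᵀ := by
      show Uᴴ = Uᵀ
      ext i j
      simp [Matrix.conjTranspose_apply]
    rw [hstar, transpose_mul, transpose_mul, transpose_transpose, diagonal_transpose,
      Matrix.mul_assoc]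
  refine ⟨U * diagonal (fun i => (f i)⁻¹) * star U, ?_, ?_, ?_, ?_⟩
  · rw [hSpec, key, key]
    congr 2
    funext i
    rcases eq_or_ne (f i) 0 with h | h <;> field_simp [h]
  · rw [hSpec, key, key]
    congr 2
    funext i
    rcases eq_or_ne (f i) 0 with h | h <;> field_simp [h]
  · rw [hSpec, key]; exact hsymm _
  · rw [hSpec, key]; exact hsymm _

lemma penrose_unique {m n : Type*} [Fintype m] [Fintype n]
    (A : Matrix m n ℝ) (B C : Matrix n m ℝ)
    (hB1 : A * B * A = A) (hB2 : B * A * B = B)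
    (hB3 : (A * B)ᵀ = A * B) (hB4 : (B * A)ᵀ = B * A)
    (hC1 : A * C * A = A) (hC2 : C * A * C = C)
    (hC3 : (A * C)ᵀ = A * C) (hC4 : (C * A)ᵀ = C * A) : B = C := by
  have hAB : A * B = A * C := by
    calc A * B = (A * C * A) * B := by rw [hC1]
    _ = (A * C)ᵀ * (A * B)ᵀ := by rw [hC3, hB3]; simp only [Matrix.mul_assoc]
    _ = Cᵀ * (A * B * A)ᵀ := by
        simp only [transpose_mul, Matrix.mul_assoc]
    _ = Cᵀ * Aᵀ := by rw [hB1]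
    _ = (A * C)ᵀ := by rw [transpose_mul]
    _ = A * C := hC3
  have hBA : B * A = C * A := by
    calc B * A = B * (A * C * A) := by rw [hC1]
    _ = (B * A)ᵀ * (C * A)ᵀ := by rw [hB4, hC4]; simp only [Matrix.mul_assoc]
    _ = (A * B * A)ᵀ * Cᵀ := by
        simp only [transpose_mul, Matrix.mul_assoc]
    _ = Aᵀ * Cᵀ := by rw [hB1]
    _ = (C * A)ᵀ := by rw [transpose_mul]
    _ = C * A := hC4
  calc B = B * A * B := hB2.symm
  _ = B * (A * C) := by rw [← hAB, Matrix.mul_assoc]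
  _ = (C * A) * C := by rw [← Matrix.mul_assoc, hBA]
  _ = C := hC2

lemma pinv_penrose {n : Type*} [Fintype n] [DecidableEq n]
    (S : Matrix n n ℝ) (hS : Sᵀ = S) :
    S * pinv S * S = S ∧ pinv S * S * pinv S = pinv S ∧
      (S * pinv S)ᵀ = S * pinv S ∧ (pinv S * S)ᵀ = pinv S * S := by
  have h := exists_penrose_of_symm S hS
  rw [pinv, dif_pos h]
  exact h.choose_spec

lemma pinv_symm {n : Type*} [Fintype n] [DecidableEq n]
    (S : Matrix n n ℝ) (hS : Sᵀ = S) : (pinv S)ᵀ = pinv S := by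
  obtain ⟨h1, h2, h3, h4⟩ := pinv_penrose S hS
  refine penrose_unique S _ _ ?_ ?_ ?_ ?_ h1 h2 h3 h4
  · calc S * (pinv S)ᵀ * S = (Sᵀ * pinv S * Sᵀ)ᵀ := by simp only [transpose_mul, transpose_transpose, Matrix.mul_assoc]
    _ = S := by rw [hS, h1, hS]
  · calc (pinv S)ᵀ * S * (pinv S)ᵀ = (pinv S * Sᵀ * pinv S)ᵀ := by simp only [transpose_mul, transpose_transpose, Matrix.mul_assoc]
    _ = (pinv S)ᵀ := by rw [hS, h2]
  · calc (S * (pinv S)ᵀ)ᵀ = pinv S * Sᵀ := by simp [transpose_mul]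
    _ = pinv S * S := by rw [hS]
    _ = (pinv S * S)ᵀ := h4.symm
    _ = Sᵀ * (pinv S)ᵀ := by simp [transpose_mul]
    _ = S * (pinv S)ᵀ := by rw [hS]
  · calc ((pinv S)ᵀ * S)ᵀ = Sᵀ * pinv S := by simp [transpose_mul]
    _ = S * pinv S := by rw [hS]
    _ = (S * pinv S)ᵀ := h3.symm
    _ = (pinv S)ᵀ * Sᵀ := by simp [transpose_mul]
    _ = (pinv S)ᵀ * S := by rw [hS]

/-- Squared Frobenius norm. -/
noncomputable def frobSq {m n : Type*} [Fintype m] [Fintype n] (A : Matrix m n ℝ) : ℝ :=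
  (Aᵀ * A).trace

/-- Orthogonal projection onto the column space of M. -/
noncomputable def proj {n r : ℕ} (M : Matrix (Fin n) (Fin r) ℝ) :
    Matrix (Fin n) (Fin n) ℝ :=
  M * pinv (Mᵀ * M) * Mᵀ

open MeasureTheory

lemma MTM_symm {n r : ℕ} (M : Matrix (Fin n) (Fin r) ℝ) : (Mᵀ * M)ᵀ = Mᵀ * M := by
  simp [transpose_mul]

lemma proj_symm {n r : ℕ} (M : Matrix (Fin n) (Fin r) ℝ) : (proj M)ᵀ = proj M := by
  unfold proj
  simp only [transpose_mul, transpose_transpose, pinv_symm _ (MTM_symm M), Matrix.mul_assoc]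

lemma proj_mul_self {n r : ℕ} (M : Matrix (Fin n) (Fin r) ℝ) : proj M * M = M := by
  set S := Mᵀ * M with hSdef
  obtain ⟨h1, h2, h3, h4⟩ := pinv_penrose S (MTM_symm M)
  set B := pinv S with hBdef
  have hBsymm : Bᵀ = B := pinv_symm S (MTM_symm M)
  set K := M * B * S - M with hK
  have e1 : Kᵀ = S * B * Mᵀ - Mᵀ := by
    rw [hK]
    simp only [transpose_sub, transpose_mul, hBsymm, MTM_symm M, hSdef, Matrix.mul_assoc]
  have hKK : Kᵀ * K = 0 := by
    calc Kᵀ * K = (S * B * Mᵀ - Mᵀ) * (M * B * S - M) := by rw [e1, hK]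
    _ = (S * B * S) * (B * S) - S * B * S - S * B * S + S := by
          rw [hSdef]; simp only [Matrix.sub_mul, Matrix.mul_sub, Matrix.mul_assoc]; abel
    _ = S * (B * S) - S - S + S := by rw [h1]
    _ = S * B * S - S := by rw [← Matrix.mul_assoc]; abel
    _ = 0 := by rw [h1]; simp
  have hK0 : K = 0 := by
    have hconj : Kᴴ = Kᵀ := by ext i j; simp [Matrix.conjTranspose_apply]
    exact Matrix.conjTranspose_mul_self_eq_zero.mp (by rw [hconj]; exact hKK)
  have hMBS : M * B * S = M := by
    have := sub_eq_zero.mp (hK ▸ hK0)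
    exact this
  show M * B * Mᵀ * M = M
  rw [Matrix.mul_assoc (M * B), ← hSdef]
  exact hMBS

lemma proj_idem {n r : ℕ} (M : Matrix (Fin n) (Fin r) ℝ) : proj M * proj M = proj M := by
  set S := Mᵀ * M with hSdef
  obtain ⟨h1, h2, h3, h4⟩ := pinv_penrose S (MTM_symm M)
  show M * pinv S * Mᵀ * (M * pinv S * Mᵀ) = M * pinv S * Mᵀ
  calc M * pinv S * Mᵀ * (M * pinv S * Mᵀ)
      = M * ((pinv S * (Mᵀ * M)) * pinv S) * Mᵀ := by
          rw [hSdef]; simp only [Matrix.mul_assoc]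
  _ = M * (pinv S * S * pinv S) * Mᵀ := by rw [← hSdef]
  _ = M * pinv S * Mᵀ := by rw [h2, Matrix.mul_assoc]

lemma frobSq_nonneg {m n : Type*} [Fintype m] [Fintype n] (A : Matrix m n ℝ) :
    0 ≤ frobSq A := by
  unfold frobSq
  rw [Matrix.trace]
  refine Finset.sum_nonneg fun j _ => ?_
  rw [Matrix.diag_apply, Matrix.mul_apply]
  exact Finset.sum_nonneg fun i _ => by simp [mul_self_nonneg]

lemma frobSq_sub {m n : Type*} [Fintype m] [Fintype n] (A C : Matrix m n ℝ) :
    frobSq (A - C) = frobSq A - 2 * (Aᵀ * C).trace + frobSq C := by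
  unfold frobSq
  have h : (Cᵀ * A).trace = (Aᵀ * C).trace := by
    rw [← Matrix.trace_transpose (Cᵀ * A), transpose_mul, transpose_transpose]
  rw [transpose_sub, Matrix.sub_mul, Matrix.mul_sub, Matrix.mul_sub, Matrix.trace_sub,
    Matrix.trace_sub, Matrix.trace_sub, h]
  ring


lemma mse_formula {Ω : Type*} [MeasurableSpace Ω] (μ : Measure Ω) [IsProbabilityMeasure μ]
    {d m : ℕ} (x : Ω → Fin d → ℝ) (t : Ω → Fin m → ℝ) (b : Fin m → ℝ)
    (hxx : ∀ i j, Integrable (fun ω => x ω i * x ω j) μ)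
    (htt : ∀ i j, Integrable (fun ω => (t ω i - b i) * (t ω j - b j)) μ)
    (hxt : ∀ i j, Integrable (fun ω => x ω i * (t ω j - b j)) μ)
    (Cx : Matrix (Fin d) (Fin d) ℝ) (hCx : ∀ i j, Cx i j = ∫ ω, x ω i * x ω j ∂μ)
    (Ct : Matrix (Fin m) (Fin m) ℝ)
    (hCt : ∀ i j, Ct i j = ∫ ω, (t ω i - b i) * (t ω j - b j) ∂μ)
    (Cxt : Matrix (Fin d) (Fin m) ℝ)
    (hCxt : ∀ i j, Cxt i j = ∫ ω, x ω i * (t ω j - b j) ∂μ)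
    (G : Matrix (Fin m) (Fin d) ℝ) :
    ∫ ω, ∑ i, (t ω i - ((G *ᵥ x ω) i + b i)) ^ 2 ∂μ
      = Ct.trace - 2 * (G * Cxt).trace + (G * Cx * Gᵀ).trace := by
  have hptw : ∀ ω, ∑ i, (t ω i - ((G *ᵥ x ω) i + b i)) ^ 2
      = (∑ i, (t ω i - b i) * (t ω i - b i))
        - 2 * (∑ i, ∑ j, G i j * (x ω j * (t ω i - b i)))
        + (∑ i, ∑ j, ∑ k, G i j * G i k * (x ω j * x ω k)) := by
    intro ω
    rw [Finset.mul_sum, ← Finset.sum_sub_distrib, ← Finset.sum_add_distrib]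
    refine Finset.sum_congr rfl fun i _ => ?_
    have hu : (G *ᵥ x ω) i = ∑ j, G i j * x ω j := by
      simp [Matrix.mulVec, dotProduct]
    have h1 : ∑ j, G i j * (x ω j * (t ω i - b i))
        = (∑ j, G i j * x ω j) * (t ω i - b i) := by
      rw [Finset.sum_mul]
      exact Finset.sum_congr rfl fun j _ => (mul_assoc _ _ _).symm
    have h2 : ∑ j, ∑ k, G i j * G i k * (x ω j * x ω k)
        = (∑ j, G i j * x ω j) * (∑ k, G i k * x ω k) := by
      rw [Finset.sum_mul_sum]
      refine Finset.sum_congr rfl fun j _ => Finset.sum_congr rfl fun k _ => by ring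
    rw [hu, h1, h2]
    ring
  have I1 : Integrable (fun ω => ∑ i, (t ω i - b i) * (t ω i - b i)) μ :=
    integrable_finset_sum _ fun i _ => htt i i
  have I2 : Integrable (fun ω => ∑ i, ∑ j, G i j * (x ω j * (t ω i - b i))) μ :=
    integrable_finset_sum _ fun i _ =>
      integrable_finset_sum _ fun j _ => (hxt j i).const_mul _
  have I3 : Integrable (fun ω => ∑ i, ∑ j, ∑ k, G i j * G i k * (x ω j * x ω k)) μ :=
    integrable_finset_sum _ fun i _ => integrable_finset_sum _ fun j _ =>
      integrable_finset_sum _ fun k _ => (hxx j k).const_mul _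
  have e1 : ∫ ω, ∑ i, (t ω i - b i) * (t ω i - b i) ∂μ = Ct.trace := by
    rw [integral_finset_sum _ fun i _ => htt i i, Matrix.trace]
    exact Finset.sum_congr rfl fun i _ => (hCt i i).symm
  have e2 : ∫ ω, ∑ i, ∑ j, G i j * (x ω j * (t ω i - b i)) ∂μ = (G * Cxt).trace := by
    rw [integral_finset_sum (f := fun i ω => ∑ j, G i j * (x ω j * (t ω i - b i))) _ fun i _ =>
      integrable_finset_sum _ fun j _ => ((hxt j i).const_mul _)]
    rw [Matrix.trace]
    refine Finset.sum_congr rfl fun i _ => ?_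
    rw [integral_finset_sum (f := fun j ω => G i j * (x ω j * (t ω i - b i))) _ fun j _ => ((hxt j i).const_mul _)]
    rw [Matrix.diag_apply, Matrix.mul_apply]
    refine Finset.sum_congr rfl fun j _ => ?_
    rw [MeasureTheory.integral_const_mul, ← hCxt]
  have e3 : ∫ ω, ∑ i, ∑ j, ∑ k, G i j * G i k * (x ω j * x ω k) ∂μ
      = (G * Cx * Gᵀ).trace := by
    rw [integral_finset_sum _ fun i _ => integrable_finset_sum _ fun j _ =>
      integrable_finset_sum _ fun k _ => ((hxx j k).const_mul _)]
    rw [Matrix.trace]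
    refine Finset.sum_congr rfl fun i _ => ?_
    rw [integral_finset_sum _ fun j _ =>
      integrable_finset_sum _ fun k _ => ((hxx j k).const_mul _)]
    rw [Matrix.diag_apply]
    calc ∑ j, ∫ ω, ∑ k, G i j * G i k * (x ω j * x ω k) ∂μ
        = ∑ j, ∑ k, G i j * G i k * Cx j k := by
          refine Finset.sum_congr rfl fun j _ => ?_
          rw [integral_finset_sum _ fun k _ => ((hxx j k).const_mul _)]
          refine Finset.sum_congr rfl fun k _ => ?_
          rw [MeasureTheory.integral_const_mul, ← hCx]
    _ = (G * Cx * Gᵀ) i i := by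
          simp only [Matrix.mul_apply, Matrix.transpose_apply, Finset.sum_mul]
          rw [Finset.sum_comm]
          exact Finset.sum_congr rfl fun j _ => Finset.sum_congr rfl fun k _ => by ring
  rw [show (fun ω => ∑ i, (t ω i - ((G *ᵥ x ω) i + b i)) ^ 2)
      = fun ω => (∑ i, (t ω i - b i) * (t ω i - b i))
        - 2 * (∑ i, ∑ j, G i j * (x ω j * (t ω i - b i)))
        + (∑ i, ∑ j, ∑ k, G i j * G i k * (x ω j * x ω k)) from funext hptw]
  have I12 : Integrable (fun ω => (∑ i, (t ω i - b i) * (t ω i - b i))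
      - 2 * (∑ i, ∑ j, G i j * (x ω j * (t ω i - b i)))) μ := I1.sub (I2.const_mul 2)
  rw [integral_add I12 I3, integral_sub I1 (I2.const_mul 2),
    MeasureTheory.integral_const_mul, e1, e2, e3]

/-- Minimum MSE of a linear regressor on the encoded data z = Θ_E x:
min over W of E‖t − (Wz + b)‖² = Tr(C_t) − ‖P_M Q⁻ᵀ C_{xt}‖_F², M = QΘ_Eᵀ. -/
theorem stmt_11 {Ω : Type*} [MeasurableSpace Ω] (μ : Measure Ω) [IsProbabilityMeasure μ]
    {d m r : ℕ} (x : Ω → Fin d → ℝ) (t : Ω → Fin m → ℝ) (b : Fin m → ℝ)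
    (hxx : ∀ i j, Integrable (fun ω => x ω i * x ω j) μ)
    (htt : ∀ i j, Integrable (fun ω => (t ω i - b i) * (t ω j - b j)) μ)
    (hxt : ∀ i j, Integrable (fun ω => x ω i * (t ω j - b j)) μ)
    (hxmean : ∀ i, ∫ ω, x ω i ∂μ = 0)
    (htmean : ∀ i, ∫ ω, t ω i ∂μ = b i)
    (Cx : Matrix (Fin d) (Fin d) ℝ) (hCx : ∀ i j, Cx i j = ∫ ω, x ω i * x ω j ∂μ)
    (Ct : Matrix (Fin m) (Fin m) ℝ)
    (hCt : ∀ i j, Ct i j = ∫ ω, (t ω i - b i) * (t ω j - b j) ∂μ)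
    (Cxt : Matrix (Fin d) (Fin m) ℝ)
    (hCxt : ∀ i j, Cxt i j = ∫ ω, x ω i * (t ω j - b j) ∂μ)
    (Q : Matrix (Fin d) (Fin d) ℝ) (hQ : Cx = Qᵀ * Q) (hQu : IsUnit Q.det)
    (hCxpd : Cx.PosDef)
    (ΘE : Matrix (Fin r) (Fin d) ℝ) :
    IsLeast {e : ℝ | ∃ W : Matrix (Fin m) (Fin r) ℝ,
        e = ∫ ω, ∑ i, (t ω i - ((W *ᵥ (ΘE *ᵥ x ω)) i + b i)) ^ 2 ∂μ}
      (Ct.trace - frobSq (proj (Q * ΘEᵀ) * (Qᵀ)⁻¹ * Cxt)) := by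
  have hQTdet : IsUnit Qᵀ.det := by rwa [Matrix.det_transpose]
  have hQT : Qᵀ * (Qᵀ)⁻¹ = 1 := Matrix.mul_nonsing_inv _ hQTdet
  set M := Q * ΘEᵀ with hM
  set P := proj M with hP
  set N := (Qᵀ)⁻¹ * Cxt with hN
  set B := pinv (Mᵀ * M) with hB
  have hBs : Bᵀ = B := by rw [hB]; exact pinv_symm _ (MTM_symm M)
  have hPM : P * M = M := by rw [hP]; exact proj_mul_self M
  have hPs : Pᵀ = P := by rw [hP]; exact proj_symm M
  have hMTP : Mᵀ * P = Mᵀ := by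
    rw [← hPs, ← transpose_mul, hPM]
  have key : ∀ W : Matrix (Fin m) (Fin r) ℝ,
      (∫ ω, ∑ i, (t ω i - ((W *ᵥ (ΘE *ᵥ x ω)) i + b i)) ^ 2 ∂μ)
        = Ct.trace - 2 * ((W * ΘE) * Cxt).trace + ((W * ΘE) * Cx * (W * ΘE)ᵀ).trace := by
    intro W
    have hv : (fun ω => ∑ i, (t ω i - ((W *ᵥ (ΘE *ᵥ x ω)) i + b i)) ^ 2)
        = fun ω => ∑ i, (t ω i - (((W * ΘE) *ᵥ x ω) i + b i)) ^ 2 := by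
      funext ω; rw [Matrix.mulVec_mulVec]
    rw [hv]
    exact mse_formula μ x t b hxx htt hxt Cx hCx Ct hCt Cxt hCxt (W * ΘE)
  have hE : ∀ W : Matrix (Fin m) (Fin r) ℝ,
      Ct.trace - 2 * ((W * ΘE) * Cxt).trace + ((W * ΘE) * Cx * (W * ΘE)ᵀ).trace
        = (Ct.trace - frobSq (P * N)) + frobSq (Q * (W * ΘE)ᵀ - P * N) := by
    intro W
    have hAT : (Q * (W * ΘE)ᵀ)ᵀ = W * Mᵀ := by
      rw [hM]; simp only [transpose_mul, transpose_transpose, Matrix.mul_assoc]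
    have h1 : (W * ΘE) * Cx * (W * ΘE)ᵀ = (Q * (W * ΘE)ᵀ)ᵀ * (Q * (W * ΘE)ᵀ) := by
      rw [hQ]; simp only [transpose_mul, transpose_transpose, Matrix.mul_assoc]
    have h3 : (Q * (W * ΘE)ᵀ)ᵀ * P = (Q * (W * ΘE)ᵀ)ᵀ := by
      rw [hAT, Matrix.mul_assoc, hMTP]
    have h2 : ((Q * (W * ΘE)ᵀ)ᵀ * (P * N)).trace = ((W * ΘE) * Cxt).trace := by
      rw [← Matrix.mul_assoc, h3, hAT, hN]
      congr 1
      calc W * Mᵀ * ((Qᵀ)⁻¹ * Cxt) = W * ΘE * ((Qᵀ * (Qᵀ)⁻¹) * Cxt) := by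
            rw [hM]
            simp only [transpose_mul, transpose_transpose, Matrix.mul_assoc]
      _ = W * ΘE * Cxt := by rw [hQT, Matrix.one_mul]
    rw [frobSq_sub, h2]
    unfold frobSq
    rw [h1]
    ring
  have hval : P * (Qᵀ)⁻¹ * Cxt = P * N := by rw [hN, Matrix.mul_assoc]
  rw [hval]
  constructor
  · refine ⟨Nᵀ * M * B, ?_⟩
    rw [key, hE]
    have hA0 : Q * ((Nᵀ * M * B) * ΘE)ᵀ = P * N := by
      rw [hP]
      show Q * ((Nᵀ * M * B) * ΘE)ᵀ = M * pinv (Mᵀ * M) * Mᵀ * N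
      rw [← hB, hM]
      simp only [transpose_mul, transpose_transpose, hBs, Matrix.mul_assoc]
    rw [hA0, sub_self]
    simp [frobSq]
  · rintro e ⟨W, rfl⟩
    rw [key, hE]
    have := frobSq_nonneg (Q * (W * ΘE)ᵀ - P * N)
    linarith
end
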